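/- arXiv:1810.06223 — 2 statements merged into one kernel-verified Lean document; each statement's English description precedes it below -/
import Mathlib

section
/- For any cubic polynomial w on [a,b] and the linear function ξ with ξ(a) = -1 and ξ(b) = 1, the mean value of w'·ξ over [a,b] equals (w'(b) - w'(a))/6. -/
open intervalIntegral Polynomial

theorem stmt_7 (a b : ℝ) (hab : a < b) (w : Polynomial ℝ) (hw : w.natDegree ≤ 3) :
    (1 / (b - a)) * ∫ x in a..b, w.derivative.eval x * ((2 * x - a - b) / (b - a)) =
      (w.derivative.eval b - w.derivative.eval a) / 6 := by
  have hba : b - a ≠ 0 := sub_ne_zero.mpr hab.ne'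
  set c1 := w.coeff 1
  set c2 := w.coeff 2
  set c3 := w.coeff 3
  have hd : w.derivative.natDegree < 3 := by
    have := Polynomial.natDegree_derivative_le w
    omega
  have h1 : ∀ x : ℝ, w.derivative.eval x = c1 + 2 * c2 * x + 3 * c3 * x ^ 2 := by
    intro x
    rw [Polynomial.eval_eq_sum_range' hd]
    simp [Finset.sum_range_succ, Polynomial.coeff_derivative, c1, c2, c3]
    ring
  have key : (∫ x in a..b, (c1 + 2 * c2 * x + 3 * c3 * x ^ 2) * (2 * x - a - b)) =
      (b - a) ^ 3 * (2 * c2 + 3 * c3 * (a + b)) / 6 := by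
    have H : ∀ x ∈ Set.uIcc a b, HasDerivAt
        (fun x : ℝ => c1 * (x ^ 2 - (a + b) * x) + 2 * c2 * (2 * x ^ 3 / 3 - (a + b) * x ^ 2 / 2)
          + 3 * c3 * (x ^ 4 / 2 - (a + b) * x ^ 3 / 3))
        ((c1 + 2 * c2 * x + 3 * c3 * x ^ 2) * (2 * x - a - b)) x := by
      intro x _
      have : HasDerivAt (fun x : ℝ => c1 * (x ^ 2 - (a + b) * x) + 2 * c2 * (2 * x ^ 3 / 3 - (a + b) * x ^ 2 / 2)
          + 3 * c3 * (x ^ 4 / 2 - (a + b) * x ^ 3 / 3))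
          (c1 * (2 * x - (a + b)) + 2 * c2 * (2 * (3 * x ^ 2) / 3 - (a + b) * (2 * x) / 2)
            + 3 * c3 * (4 * x ^ 3 / 2 - (a + b) * (3 * x ^ 2) / 3)) x := by
        apply HasDerivAt.add
        apply HasDerivAt.add
        · exact ((hasDerivAt_pow 2 x).sub (((hasDerivAt_id x).const_mul (a + b)))).const_mul c1 |>.congr_deriv (by push_cast; ring)
        · exact (((hasDerivAt_pow 3 x).const_mul 2 |>.div_const 3).sub ((hasDerivAt_pow 2 x).const_mul (a + b) |>.div_const 2)).const_mul (2 * c2) |>.congr_deriv (by push_cast; ring)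
        · exact (((hasDerivAt_pow 4 x).div_const 2).sub ((hasDerivAt_pow 3 x).const_mul (a + b) |>.div_const 3)).const_mul (3 * c3) |>.congr_deriv (by push_cast; ring)
      exact this.congr_deriv (by ring)
    rw [intervalIntegral.integral_eq_sub_of_hasDerivAt H ((Continuous.mul (by continuity) (by continuity)).intervalIntegrable a b)]
    ring
  have h2 : (∫ x in a..b, w.derivative.eval x * ((2 * x - a - b) / (b - a))) =
      (1 / (b - a)) * ∫ x in a..b, (c1 + 2 * c2 * x + 3 * c3 * x ^ 2) * (2 * x - a - b) := by
    rw [← intervalIntegral.integral_const_mul]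
    congr 1; ext x; rw [h1]; field_simp
  rw [h2, key, h1, h1]
  field_simp
  ring
end

section
/- Let K be a convex quadrilateral with vertices V1, V2, V3, V4 in counterclockwise order, and let A = (1/4)(V3 - V4 - V1 + V2 | V3 + V4 - V1 - V2) (a 2×2 matrix with these two column vectors), d = (1/4)(V3 - V4 + V1 - V2), and s = (s1, s2)^T = A^{-1} d. Then |s1| + |s2| < 1. -/
/-- Cross product of two planar vectors. -/
def cross2 (u v : ℝ × ℝ) : ℝ := u.1 * v.2 - u.2 * v.1

theorem stmt_9 (V1 V2 V3 V4 : ℝ × ℝ)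
    (hc1 : 0 < cross2 (V2 - V1) (V3 - V2))
    (hc2 : 0 < cross2 (V3 - V2) (V4 - V3))
    (hc3 : 0 < cross2 (V4 - V3) (V1 - V4))
    (hc4 : 0 < cross2 (V1 - V4) (V2 - V1))
    (A : Matrix (Fin 2) (Fin 2) ℝ)
    (hA : A = !![(V3.1 - V4.1 - V1.1 + V2.1) / 4, (V3.1 + V4.1 - V1.1 - V2.1) / 4;
                 (V3.2 - V4.2 - V1.2 + V2.2) / 4, (V3.2 + V4.2 - V1.2 - V2.2) / 4])
    (d : Fin 2 → ℝ)
    (hd : d = ![(V3.1 - V4.1 + V1.1 - V2.1) / 4, (V3.2 - V4.2 + V1.2 - V2.2) / 4])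
    (s : Fin 2 → ℝ) (hs : s = A⁻¹.mulVec d) :
    |s 0| + |s 1| < 1 := by
  simp only [cross2, Prod.fst_sub, Prod.snd_sub] at hc1 hc2 hc3 hc4
  set c1 : ℝ := (V2.1 - V1.1) * (V3.2 - V2.2) - (V2.2 - V1.2) * (V3.1 - V2.1) with hc1d
  set c2 : ℝ := (V3.1 - V2.1) * (V4.2 - V3.2) - (V3.2 - V2.2) * (V4.1 - V3.1) with hc2d
  set c3 : ℝ := (V4.1 - V3.1) * (V1.2 - V4.2) - (V4.2 - V3.2) * (V1.1 - V4.1) with hc3d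
  set c4 : ℝ := (V1.1 - V4.1) * (V2.2 - V1.2) - (V1.2 - V4.2) * (V2.1 - V1.1) with hc4d
  have hrel : c1 - c2 + c3 - c4 = 0 := by rw [hc1d, hc2d, hc3d, hc4d]; ring
  have hdet : A.det = (c1 + c3) / 8 := by
    subst hA
    rw [Matrix.det_fin_two_of, hc1d, hc3d]; ring
  have hdpos : 0 < A.det := by rw [hdet]; linarith
  have hne : A.det ≠ 0 := ne_of_gt hdpos
  have hinv : A * A⁻¹ = 1 := Matrix.mul_nonsing_inv A (isUnit_iff_ne_zero.mpr hne)
  have hAs : A.mulVec s = d := by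
    rw [hs, Matrix.mulVec_mulVec, hinv, Matrix.one_mulVec]
  have e0 := congrFun hAs 0
  have e1 := congrFun hAs 1
  subst hA hd
  simp [Matrix.mulVec, dotProduct, Fin.sum_univ_two] at e0 e1
  have hs0 : s 0 * (c1 + c3) = c2 - c1 := by
    rw [hc1d, hc2d, hc3d]
    linear_combination (2 * (V3.2 + V4.2 - V1.2 - V2.2)) * e0
      - (2 * (V3.1 + V4.1 - V1.1 - V2.1)) * e1
  have hs1 : s 1 * (c1 + c3) = c2 - c3 := by
    rw [hc1d, hc2d, hc3d]
    linear_combination (-2 * (V3.2 - V4.2 - V1.2 + V2.2)) * e0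
      + (2 * (V3.1 - V4.1 - V1.1 + V2.1)) * e1
  have hsum : 0 < c1 + c3 := by linarith
  have habs0 : |s 0| * (c1 + c3) = |c2 - c1| := by
    rw [← hs0, abs_mul, abs_of_pos hsum]
  have habs1 : |s 1| * (c1 + c3) = |c2 - c3| := by
    rw [← hs1, abs_mul, abs_of_pos hsum]
  have key : |c2 - c1| + |c2 - c3| < c1 + c3 := by
    rcases abs_cases (c2 - c1) with ⟨h0, _⟩ | ⟨h0, _⟩ <;>
      rcases abs_cases (c2 - c3) with ⟨h1, _⟩ | ⟨h1, _⟩ <;>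
        rw [h0, h1] <;> linarith
  nlinarith [habs0, habs1, key, hsum, abs_nonneg (s 0), abs_nonneg (s 1)]
end
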